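/- Let S be a numerical set with associated Young diagram Y_S under the Keith–Nath transformation. Then S is a numerical semigroup if and only if every hook length occurring in Y_S also occurs as a hook length of some cell in the first column of Y_S (equivalently, every hook length is a gap of S). -/

import Mathlib

/-- The `i`-th largest element (0-based) of `P`. -/
def partDesc (P : Finset ℕ) (i : ℕ) : ℕ := ((P.sort (· ≤ ·)).reverse).getD i 0

/-- Length of the `i`-th row (0-based) of the Young diagram obtained from the numerical
set `ℕ \ P` via the Keith–Nath transformation: the number of east steps (elements of the
numerical set) preceding the north step at the `i`-th largest gap. -/
def knRow (P : Finset ℕ) (i : ℕ) : ℕ :=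
  ((Finset.range (partDesc P i)).filter (fun s => s ∉ P)).card

/-- Length of the `j`-th column (0-based) of the Keith–Nath Young diagram. -/
def knCol (P : Finset ℕ) (j : ℕ) : ℕ :=
  ((Finset.range P.card).filter (fun i => j < knRow P i)).card

/-- Hook length of the cell `(i, j)` (0-based) of the Keith–Nath Young diagram:
arm + leg + 1. -/
def knHook (P : Finset ℕ) (i j : ℕ) : ℕ := knRow P i + knCol P j - i - j - 1

/-- Total number of cells of the Keith–Nath Young diagram. -/
def knCells (P : Finset ℕ) : ℕ := ∑ i ∈ Finset.range P.card, knRow P i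

section aux

variable {P : Finset ℕ}

lemma partDesc_eq_getElem {i : ℕ} (hi : i < P.card) :
    partDesc P i = (P.sort (· ≤ ·))[P.card - 1 - i]'(by
      rw [Finset.length_sort]; omega) := by
  have hlen : (P.sort (· ≤ ·)).length = P.card := Finset.length_sort _
  have hrev : (P.sort (· ≤ ·)).reverse.length = P.card := by simp [hlen]
  rw [partDesc, List.getD_eq_getElem _ _ (by omega)]
  rw [List.getElem_reverse]
  simp only [hlen]

lemma partDesc_mem {i : ℕ} (hi : i < P.card) : partDesc P i ∈ P := by
  rw [partDesc_eq_getElem hi, ← Finset.mem_sort (· ≤ ·)]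
  exact List.getElem_mem _

lemma partDesc_strictAnti {i i' : ℕ} (h : i < i') (hi' : i' < P.card) :
    partDesc P i' < partDesc P i := by
  have hlen : (P.sort (· ≤ ·)).length = P.card := Finset.length_sort _
  rw [partDesc_eq_getElem (i := i) (by omega), partDesc_eq_getElem (i := i') hi']
  have hs : List.Pairwise (· < ·) (P.sort (· ≤ ·)) := List.sortedLT_iff_pairwise.mp (Finset.sortedLT_sort P)
  rw [List.pairwise_iff_getElem] at hs
  exact hs _ _ _ _ (by omega)

lemma partDesc_surj {x : ℕ} (hx : x ∈ P) : ∃ i, i < P.card ∧ partDesc P i = x := by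
  have hlen : (P.sort (· ≤ ·)).length = P.card := Finset.length_sort _
  rw [← Finset.mem_sort (· ≤ ·), List.mem_iff_getElem] at hx
  obtain ⟨k, hk, hkx⟩ := hx
  refine ⟨P.card - 1 - k, by omega, ?_⟩
  rw [partDesc_eq_getElem (by omega)]
  rw [← hkx]
  congr 1
  omega

lemma partDesc_injOn {i i' : ℕ} (hi : i < P.card) (hi' : i' < P.card)
    (h : partDesc P i = partDesc P i') : i = i' := by
  rcases lt_trichotomy i i' with hlt | he | hlt
  · exact absurd h (by have := partDesc_strictAnti hlt hi'; omega)
  · exact he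
  · exact absurd h (by have := partDesc_strictAnti hlt hi; omega)

lemma countP_add_count (x : ℕ) :
    (P.filter (· < x)).card + Nat.count (fun n => n ∉ P) x = x := by
  have h1 : P.filter (· < x) = (Finset.range x).filter (· ∈ P) := by
    ext y; simp [Finset.mem_filter, Finset.mem_range, and_comm]
  rw [h1, Nat.count_eq_card_filter_range]
  have := Finset.card_filter_add_card_filter_not
    (s := Finset.range x) (p := (· ∈ P))
  simpa using this

lemma knRow_eq_count (i : ℕ) :
    knRow P i = Nat.count (fun n => n ∉ P) (partDesc P i) := by
  rw [knRow, Nat.count_eq_card_filter_range]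

lemma card_filter_ge {i : ℕ} (hi : i < P.card) :
    (P.filter (fun x => partDesc P i ≤ x)).card = i + 1 := by
  have himg : P.filter (fun x => partDesc P i ≤ x)
      = (Finset.range (i + 1)).image (partDesc P) := by
    ext x
    simp only [Finset.mem_filter, Finset.mem_image, Finset.mem_range]
    constructor
    · rintro ⟨hxP, hge⟩
      obtain ⟨k, hk, hkx⟩ := partDesc_surj hxP
      refine ⟨k, ?_, hkx⟩
      by_contra hki
      have : partDesc P k < partDesc P i := partDesc_strictAnti (by omega) hk
      omega
    · rintro ⟨k, hk, rfl⟩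
      refine ⟨partDesc_mem (by omega), ?_⟩
      rcases eq_or_lt_of_le (Nat.lt_succ_iff.mp hk) with he | hlt
      · rw [he]
      · exact le_of_lt (partDesc_strictAnti hlt hi)
  rw [himg, Finset.card_image_of_injOn, Finset.card_range]
  intro a ha b hb hab
  simp only [Finset.coe_range, Set.mem_Iio] at ha hb
  exact partDesc_injOn (by omega) (by omega) hab

lemma card_filter_gt {x : ℕ} :
    ((Finset.range P.card).filter (fun i => x < partDesc P i)).card
      = (P.filter (fun y => x < y)).card := by
  have himg : P.filter (fun y => x < y)
      = ((Finset.range P.card).filter (fun i => x < partDesc P i)).image (partDesc P) := by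
    ext y
    simp only [Finset.mem_filter, Finset.mem_image, Finset.mem_range]
    constructor
    · rintro ⟨hyP, hgt⟩
      obtain ⟨k, hk, hky⟩ := partDesc_surj hyP
      exact ⟨k, ⟨hk, by omega⟩, hky⟩
    · rintro ⟨k, ⟨hk, hxk⟩, rfl⟩
      exact ⟨partDesc_mem hk, hxk⟩
  rw [himg, Finset.card_image_of_injOn]
  intro a ha b hb hab
  simp only [Finset.coe_filter, Set.mem_setOf_eq, Finset.mem_range] at ha hb
  exact partDesc_injOn ha.1 hb.1 hab

lemma card_split {x : ℕ} (hx : x ∉ P) :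
    (P.filter (· < x)).card + (P.filter (fun y => x < y)).card = P.card := by
  have h := Finset.card_filter_add_card_filter_not (s := P) (p := (· < x))
  have he : P.filter (fun a => ¬ a < x) = P.filter (fun y => x < y) := by
    apply Finset.filter_congr
    intro y hy
    have : y ≠ x := fun h => hx (h ▸ hy)
    constructor <;> (intro; omega)
  rw [he] at h
  exact h

lemma hp_infinite (P : Finset ℕ) : {n | n ∉ P}.Infinite := by
  have : {n | n ∉ P} = (↑P : Set ℕ)ᶜ := rfl
  rw [this]
  exact (P.finite_toSet).infinite_compl

/-- Master lemma: the hook length of cell `(i, j)` equals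
`partDesc P i - Nat.nth (· ∉ P) j`. -/
lemma knHook_eq {i j : ℕ} (hi : i < P.card) (hj : j < knRow P i) :
    knHook P i j = partDesc P i - Nat.nth (fun n => n ∉ P) j := by
  classical
  set p : ℕ → Prop := fun n => n ∉ P with hp_def
  have hp : (setOf p).Infinite := hp_infinite P
  set g := partDesc P i with hg
  set s := Nat.nth p j with hs
  have hsP : s ∉ P := Nat.nth_mem_of_infinite hp j
  -- s < g
  have hsg : s < g := by
    have := Nat.lt_nth_iff_count_lt hp (a := j) (b := g)
    rw [knRow_eq_count] at hj
    exact this.mp hj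
  -- row equation
  have h1 : (P.filter (· < g)).card + knRow P i = g := by
    rw [knRow_eq_count]; exact countP_add_count g
  -- rank equation for g
  have h2 : (P.filter (· < g)).card + (i + 1) = P.card := by
    rw [← card_filter_ge hi]
    have h := Finset.card_filter_add_card_filter_not (s := P) (p := (· < g))
    have he : P.filter (fun a => ¬ a < g) = P.filter (fun x => partDesc P i ≤ x) := by
      apply Finset.filter_congr
      intro y hy
      constructor <;> (intro; omega)
    rw [he] at h
    exact h
  -- rank equation for s
  have h4 : (P.filter (· < s)).card + j = s := by
    have := countP_add_count (P := P) s
    rwa [Nat.count_nth_of_infinite hp j] at this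
  -- column equation
  have h5 : knCol P j = (P.filter (fun y => s < y)).card := by
    rw [knCol, ← card_filter_gt]
    congr 1
    apply Finset.filter_congr
    intro k hk
    rw [knRow_eq_count]
    exact Nat.lt_nth_iff_count_lt hp
  have h6 : (P.filter (· < s)).card + (P.filter (fun y => s < y)).card = P.card :=
    card_split hsP
  rw [knHook]
  omega

end aux

/-- A numerical set is a numerical semigroup iff every hook length of its Keith–Nath
Young diagram occurs as a hook length of some cell of the first column. -/
theorem stmt5 (S : Set ℕ) (h0 : 0 ∈ S) (hfin : (Sᶜ : Set ℕ).Finite) :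
    (∀ a ∈ S, ∀ b ∈ S, a + b ∈ S) ↔
      (∀ i j : ℕ, i < hfin.toFinset.card → j < knRow hfin.toFinset i →
        ∃ i' : ℕ, i' < hfin.toFinset.card ∧ 0 < knRow hfin.toFinset i' ∧
          knHook hfin.toFinset i' 0 = knHook hfin.toFinset i j) := by
  classical
  set P := hfin.toFinset with hP
  have hmem : ∀ n : ℕ, n ∈ P ↔ n ∉ S := by
    intro n; rw [hP, Set.Finite.mem_toFinset]; rfl
  set p : ℕ → Prop := fun n => n ∉ P with hp_def
  have hp : (setOf p).Infinite := hp_infinite P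
  have hpS : ∀ n, p n ↔ n ∈ S := by
    intro n; rw [hp_def]; simp only [hmem n]; tauto
  have hnth0 : Nat.nth p 0 = 0 := Nat.nth_zero_of_zero ((hpS 0).mpr h0)
  constructor
  · -- semigroup → hooks in first column
    intro hsg i j hi hj
    set g := partDesc P i with hg
    have hgP : g ∈ P := partDesc_mem hi
    set s := Nat.nth p j with hs
    have hsS : s ∈ S := (hpS s).mp (Nat.nth_mem_of_infinite hp j)
    have hsg' : s < g := by
      rw [knRow_eq_count] at hj
      exact (Nat.lt_nth_iff_count_lt hp).mp hj
    -- g - s is a gap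
    have hgap : (g - s) ∈ P := by
      rw [hmem]
      intro hmemS
      have : s + (g - s) ∈ S := hsg s hsS (g - s) hmemS
      rw [Nat.add_sub_cancel' (le_of_lt hsg')] at this
      exact ((hmem g).mp hgP) this
    obtain ⟨i', hi', hpd⟩ := partDesc_surj hgap
    have hpos : 0 < knRow P i' := by
      rw [knRow_eq_count]
      apply (Nat.lt_nth_iff_count_lt hp).mpr
      rw [hnth0, hpd]
      omega
    refine ⟨i', hi', hpos, ?_⟩
    rw [knHook_eq hi' hpos, knHook_eq hi hj, hnth0, hpd, ← hp_def, ← hs]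
    omega
  · -- hooks in first column → semigroup
    intro h a ha b hb
    by_contra hab
    have habP : a + b ∈ P := (hmem _).mpr hab
    have hb0 : 0 < b := by
      rcases Nat.eq_zero_or_pos b with rfl | h'
      · exact absurd (by simpa using ha) hab
      · exact h'
    obtain ⟨i, hi, hpd⟩ := partDesc_surj habP
    have hpa : p a := (hpS a).mpr ha
    set j := Nat.count p a with hj_def
    have hnthj : Nat.nth p j = a := Nat.nth_count hpa
    have hj : j < knRow P i := by
      rw [knRow_eq_count]
      apply (Nat.lt_nth_iff_count_lt hp).mpr
      rw [hnthj, hpd]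
      omega
    obtain ⟨i', hi', hpos, heq⟩ := h i j hi hj
    have h1 : knHook P i' 0 = partDesc P i' := by
      rw [knHook_eq hi' hpos, hnth0]
      omega
    have h2 : knHook P i j = b := by
      rw [knHook_eq hi hj, hnthj, hpd]
      omega
    have : partDesc P i' = b := by rw [← h1, heq, h2]
    have : b ∈ P := this ▸ partDesc_mem hi'
    exact (hmem b).mp this hb
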